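/- Higher-order estimate under the stronger source condition: suppose p* = F*Fη* ∈ ∂J(u*) for some η* ∈ U, Fu* = v*, and u_α minimizes ½‖Fu − v‖² + αJ(u). Then d_J^{p*}(u_α, u*) ≤ d_J^{p*}(u* − αη*, u*) + ‖v − v*‖²/(2α). -/

import Mathlib

open scoped RealInnerProductSpace

/-- Convexity for an extended-real-valued functional. -/
def ConvexFn {U : Type*} [AddCommGroup U] [Module ℝ U] (J : U → EReal) : Prop :=
  ∀ u w : U, ∀ t : ℝ, 0 ≤ t → t ≤ 1 →
    J (t • u + (1 - t) • w) ≤ ((t : ℝ) : EReal) * J u + ((1 - t : ℝ) : EReal) * J w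

/-- Properness: not identically `+∞` and nowhere `-∞`. -/
def ProperFn {U : Type*} (J : U → EReal) : Prop :=
  (∃ w, J w ≠ ⊤) ∧ (∀ w, J w ≠ ⊥)

/-- `p` is a subgradient of `J` at `u`. -/
def IsSubgrad {U : Type*} [NormedAddCommGroup U] [InnerProductSpace ℝ U]
    (J : U → EReal) (u p : U) : Prop :=
  ∀ w : U, J u + ((⟪p, w - u⟫ : ℝ) : EReal) ≤ J w

/-- One-sided Bregman distance `d_J^p(w, u)`. -/
noncomputable def bregman {U : Type*} [NormedAddCommGroup U] [InnerProductSpace ℝ U]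
    (J : U → EReal) (p u w : U) : EReal :=
  J w - J u - ((⟪p, w - u⟫ : ℝ) : EReal)

theorem stmt15 {U V : Type*} [NormedAddCommGroup U] [InnerProductSpace ℝ U] [CompleteSpace U]
    [NormedAddCommGroup V] [InnerProductSpace ℝ V] [CompleteSpace V]
    (F : U →L[ℝ] V) (J : U → EReal) (hconv : ConvexFn J) (hproper : ProperFn J)
    (v vs : V) (α : ℝ) (hα : 0 < α)
    (us ηs : U)
    (hsrc : IsSubgrad J us ((ContinuousLinearMap.adjoint F) (F ηs)))
    (hdata : F us = vs)
    (uα : U)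
    (hmin : ∀ u : U,
      (((1/2) * ‖F uα - v‖ ^ 2 : ℝ) : EReal) + ((α : ℝ) : EReal) * J uα ≤
        (((1/2) * ‖F u - v‖ ^ 2 : ℝ) : EReal) + ((α : ℝ) : EReal) * J u) :
    bregman J ((ContinuousLinearMap.adjoint F) (F ηs)) us uα ≤
      bregman J ((ContinuousLinearMap.adjoint F) (F ηs)) us (us - α • ηs) +
        ((‖v - vs‖ ^ 2 / (2 * α) : ℝ) : EReal) := by
  obtain ⟨⟨w0, hw0⟩, hbot⟩ := hproper
  have hustop : J us ≠ ⊤ := by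
    intro h
    have h1 := hsrc w0
    rw [h, EReal.top_add_coe, top_le_iff] at h1
    exact hw0 h1
  unfold bregman
  lift J us to ℝ using ⟨hustop, hbot us⟩ with B hB
  have huatop : J uα ≠ ⊤ := by
    intro h
    have h1 := hmin us
    rw [← hB, h, EReal.coe_mul_top_of_pos hα, EReal.coe_add_top, top_le_iff,
      ← EReal.coe_mul, ← EReal.coe_add] at h1
    exact EReal.coe_ne_top _ h1
  lift J uα to ℝ using ⟨huatop, hbot uα⟩ with A hA
  by_cases hu1top : J (us - α • ηs) = ⊤
  · rw [hu1top, EReal.top_sub_coe, EReal.top_sub_coe,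
      EReal.top_add_of_ne_bot (EReal.coe_ne_bot _)]
    exact le_top
  · lift J (us - α • ηs) to ℝ using ⟨hu1top, hbot _⟩ with C hC
    have hmr : (1/2) * ‖F uα - v‖ ^ 2 + α * A ≤ (1/2) * ‖F (us - α • ηs) - v‖ ^ 2 + α * C := by
      have h1 := hmin (us - α • ηs)
      rw [← hC, ← EReal.coe_mul, ← EReal.coe_mul, ← EReal.coe_add, ← EReal.coe_add,
        EReal.coe_le_coe_iff] at h1
      exact h1
    have hgoal : A - B - ⟪(ContinuousLinearMap.adjoint F) (F ηs), uα - us⟫ ≤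
        C - B - ⟪(ContinuousLinearMap.adjoint F) (F ηs), us - α • ηs - us⟫ +
          ‖v - vs‖ ^ 2 / (2 * α) := by
      have hq1 : ⟪(ContinuousLinearMap.adjoint F) (F ηs), uα - us⟫ = ⟪F ηs, F uα - vs⟫ := by
        rw [ContinuousLinearMap.adjoint_inner_left, map_sub, hdata]
      have hq2 : ⟪(ContinuousLinearMap.adjoint F) (F ηs), us - α • ηs - us⟫
          = -(α * ⟪F ηs, F ηs⟫) := by
        rw [ContinuousLinearMap.adjoint_inner_left, sub_sub_cancel_left, map_neg, map_smul]
        simp [inner_smul_right]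
      have hFu1 : F (us - α • ηs) = vs - α • F ηs := by
        rw [map_sub, map_smul, hdata]
      set q := F ηs with hq
      set w := F uα with hw
      have hid : (1/2) * ‖F (us - α • ηs) - v‖ ^ 2 - (1/2) * ‖w - v‖ ^ 2 - α * ⟪q, w - vs⟫
          = ‖v - vs‖ ^ 2 / 2 + α ^ 2 * ⟪q, q⟫ - (1/2) * ‖(w - v) + α • q‖ ^ 2 := by
        rw [hFu1]
        simp only [← real_inner_self_eq_norm_sq]
        simp only [inner_sub_left, inner_sub_right, inner_add_left, inner_add_right,
          real_inner_smul_left, real_inner_smul_right, real_inner_comm]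
        ring
      have hnn : 0 ≤ (1/2) * ‖(w - v) + α • q‖ ^ 2 := by positivity
      rw [hq1, hq2]
      have hdiv : ‖v - vs‖ ^ 2 / (2 * α) * α = ‖v - vs‖ ^ 2 / 2 := by
        field_simp
      have key : α * (A - B - ⟪q, w - vs⟫) ≤
          α * (C - B - -(α * ⟪q, q⟫) + ‖v - vs‖ ^ 2 / (2 * α)) := by
        have expand : α * (C - B - -(α * ⟪q, q⟫) + ‖v - vs‖ ^ 2 / (2 * α))
            = α * C - α * B + α ^ 2 * ⟪q, q⟫ + ‖v - vs‖ ^ 2 / 2 := by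
          rw [mul_add, mul_comm α (‖v - vs‖ ^ 2 / (2 * α)), hdiv]
          ring
        rw [expand]
        nlinarith [hmr, hid, hnn]
      exact le_of_mul_le_mul_left key hα
    calc ((A : EReal) - B - ⟪(ContinuousLinearMap.adjoint F) (F ηs), uα - us⟫)
        = (((A - B - ⟪(ContinuousLinearMap.adjoint F) (F ηs), uα - us⟫ : ℝ)) : EReal) := by
          norm_cast
      _ ≤ (((C - B - ⟪(ContinuousLinearMap.adjoint F) (F ηs), us - α • ηs - us⟫ +
            ‖v - vs‖ ^ 2 / (2 * α) : ℝ)) : EReal) := by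
          exact_mod_cast hgoal
      _ = ((C : EReal) - B - ⟪(ContinuousLinearMap.adjoint F) (F ηs), us - α • ηs - us⟫) +
            ((‖v - vs‖ ^ 2 / (2 * α) : ℝ) : EReal) := by
          norm_cast
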